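/- arXiv:1607.01141 — 4 statements merged into one kernel-verified Lean document; each statement's English description precedes it below -/
import Mathlib

section
/- For every integer t ≥ 4 and every integer m ≥ 1, there are infinitely many primes p such that the projective norm graph P(p,t) contains a copy of the complete bipartite graph K_{t-1,m}. -/
open Polynomial

/-- The projective norm graph on vertex set `L × Kˣ`, where `L/K` is a field extension:
two distinct vertices `(α, a)` and `(β, b)` are adjacent iff `N_{L/K}(α + β) = a * b`. -/
noncomputable def projNormGraph (K L : Type) [Field K] [Field L] [Algebra K L] :
    SimpleGraph (L × Kˣ) :=
  SimpleGraph.fromRel fun v w => Algebra.norm K (v.1 + w.1) = (v.2 : K) * (w.2 : K)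

/-- `G` contains a copy of the complete bipartite graph `K_{s,m}`. -/
def ContainsKst {V : Type} (G : SimpleGraph V) (s m : ℕ) : Prop :=
  ∃ A B : Finset V, Disjoint A B ∧ A.card = s ∧ B.card = m ∧
    ∀ a ∈ A, ∀ b ∈ B, G.Adj a b

section aux

variable {p n : ℕ} [Fact p.Prime]

lemma norm_frob (x : GaloisField p n) :
    Algebra.norm (ZMod p) (x ^ p) = Algebra.norm (ZMod p) x := by
  letI L := GaloisField p n
  haveI : ExpChar L p := .prime Fact.out
  let σ : L ≃ₐ[ZMod p] L :=
    AlgEquiv.ofRingEquiv (f := frobeniusEquiv L p) (fun c => by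
      show frobenius L p _ = _
      rw [frobenius_def, ← map_pow, ZMod.pow_card])
  have hσ : σ x = x ^ p := rfl
  have key : ∀ y : L,
      algebraMap (ZMod p) L (Algebra.norm (ZMod p) y) = ∏ τ : L ≃ₐ[ZMod p] L, τ y :=
    Algebra.norm_eq_prod_automorphisms _
  have h : algebraMap (ZMod p) L (Algebra.norm (ZMod p) (σ x))
      = algebraMap (ZMod p) L (Algebra.norm (ZMod p) x) := by
    rw [key, key]
    exact Fintype.prod_equiv (Equiv.mulRight σ) _ _ (fun τ => rfl)
  rw [hσ] at h
  exact (algebraMap (ZMod p) (GaloisField p n)).injective h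

lemma norm_frob_pow (i : ℕ) (x : GaloisField p n) :
    Algebra.norm (ZMod p) (x ^ p ^ i) = Algebra.norm (ZMod p) x := by
  induction i with
  | zero => simp
  | succ k ih => rw [pow_succ, pow_mul, norm_frob, ih]

end aux

/-- For every `t ≥ 4` and `m ≥ 1` there are infinitely many primes `p` such that
the projective norm graph `P(p, t)` (on `F_{p^{t-1}} × F_pˣ`) contains a copy of
`K_{t-1, m}`. -/
theorem infinitely_many_primes_Kt1m (t m : ℕ) (ht : 4 ≤ t) (hm : 1 ≤ m) :
    {p : ℕ | ∃ hp : p.Prime,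
      haveI : Fact p.Prime := ⟨hp⟩
      ContainsKst (projNormGraph (ZMod p) (GaloisField p (t - 1))) (t - 1) m}.Infinite := by
  refine ((Nat.infinite_setOf_prime.diff (Set.finite_Iic m)).mono ?_)
  rintro p ⟨hp, hpm⟩
  simp only [Set.mem_Iic, not_le] at hpm
  refine ⟨hp, ?_⟩
  haveI : Fact p.Prime := ⟨hp⟩
  classical
  have hp2 : 2 ≤ p := hp.two_le
  have hn0 : t - 1 ≠ 0 := by omega
  set L := GaloisField p (t - 1) with hL
  set φ := algebraMap (ZMod p) L with hφ
  haveI : ExpChar L p := .prime Fact.out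
  have hcardL : Nat.card L = p ^ (t - 1) := GaloisField.card p _ hn0
  obtain ⟨g, hg⟩ := IsCyclic.exists_generator (α := Lˣ)
  have horder : orderOf g = p ^ (t - 1) - 1 := by
    rw [orderOf_eq_card_of_forall_mem_zpowers hg, Nat.card_units, hcardL]
  have hpow1 : p ^ (t - 2) * p = p ^ (t - 1) := by
    rw [← pow_succ]; congr 1; omega
  have h2a : 2 ≤ p ^ (t - 2) := le_trans hp2 (Nat.le_self_pow (by omega) p)
  have h2N : 2 * p ^ (t - 2) ≤ p ^ (t - 1) := by
    rw [← hpow1, mul_comm]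
    exact Nat.mul_le_mul_left _ hp2
  have hmulsub : p ^ (t - 2) * (p - 1) = p ^ (t - 1) - p ^ (t - 2) := by
    rw [Nat.mul_sub, mul_one, hpow1]
  have NOTIN : ∀ i < t - 1, ∀ c : ZMod p, ((g : L) ^ p ^ i) ≠ φ c := by
    intro i hi c hEq
    have hgne : ((g : L) ^ p ^ i) ≠ 0 := pow_ne_zero _ g.ne_zero
    have hc0 : c ≠ 0 := by
      rintro rfl
      rw [map_zero] at hEq
      exact hgne hEq
    have h1 : ((g : L) ^ p ^ i) ^ (p - 1) = 1 := by
      rw [hEq, ← map_pow, ZMod.pow_card_sub_one_eq_one hc0, map_one]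
    have h2 : g ^ (p ^ i * (p - 1)) = 1 := Units.ext (by
      rw [Units.val_pow_eq_pow_val, Units.val_one, pow_mul]; exact h1)
    have hdvd : p ^ (t - 1) - 1 ∣ p ^ i * (p - 1) := horder ▸ orderOf_dvd_of_pow_eq_one h2
    have hle : p ^ (t - 1) - 1 ≤ p ^ i * (p - 1) :=
      Nat.le_of_dvd (Nat.mul_pos (pow_pos (by omega) _) (by omega)) hdvd
    have hia : p ^ i * (p - 1) ≤ p ^ (t - 2) * (p - 1) :=
      Nat.mul_le_mul_right _ (Nat.pow_le_pow_right (by omega) (by omega))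
    omega
  have DIST : ∀ i < t - 1, ∀ j < t - 1, ((g : L) ^ p ^ i) = ((g : L) ^ p ^ j) → i = j := by
    intro i hi j hj hEq
    have hu : g ^ p ^ i = g ^ p ^ j := Units.ext (by
      rw [Units.val_pow_eq_pow_val, Units.val_pow_eq_pow_val]; exact hEq)
    have hlt : ∀ k, k < t - 1 → p ^ k < orderOf g := by
      intro k hk
      have : p ^ k ≤ p ^ (t - 2) := Nat.pow_le_pow_right (by omega) (by omega)
      omega
    have := pow_injOn_Iio_orderOf (x := g) (Set.mem_Iio.mpr (hlt i hi))
      (Set.mem_Iio.mpr (hlt j hj)) hu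
    exact Nat.pow_right_injective hp2 this
  have hne0 : ∀ c : ZMod p, (g : L) + φ c ≠ 0 := by
    intro c h
    have : (g : L) ^ p ^ 0 = φ (-c) := by
      rw [pow_zero, pow_one, map_neg]
      exact eq_neg_of_add_eq_zero_left h
    exact NOTIN 0 (by omega) (-c) this
  have hnorm0 : ∀ c : ZMod p, Algebra.norm (ZMod p) ((g : L) + φ c) ≠ 0 := by
    intro c
    rw [Algebra.norm_ne_zero_iff]
    exact hne0 c
  let b : ℕ → (ZMod p)ˣ := fun j => Units.mk0 _ (hnorm0 ((j : ZMod p)))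
  refine ⟨(Finset.range (t - 1)).image
      (fun (i : ℕ) => (((g : L) ^ p ^ i, (1 : (ZMod p)ˣ)) : L × (ZMod p)ˣ)),
    (Finset.range m).image (fun (j : ℕ) => ((φ (j : ZMod p), b j) : L × (ZMod p)ˣ)),
    ?_, ?_, ?_, ?_⟩
  · rw [Finset.disjoint_left]
    rintro a ha hb
    simp only [Finset.mem_image, Finset.mem_range] at ha hb
    obtain ⟨i, hi, rfl⟩ := ha
    obtain ⟨j, hj, hEq⟩ := hb
    exact NOTIN i hi (j : ZMod p) (congrArg Prod.fst hEq).symm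
  · rw [Finset.card_image_of_injOn (fun i hi j hj hEq => by
      simp only [Finset.coe_range, Set.mem_Iio] at hi hj
      exact DIST i hi j hj (congrArg Prod.fst hEq)), Finset.card_range]
  · rw [Finset.card_image_of_injOn (fun i hi j hj hEq => by
      simp only [Finset.coe_range, Set.mem_Iio] at hi hj
      have h1 : (i : ZMod p) = (j : ZMod p) :=
        (algebraMap (ZMod p) L).injective (congrArg Prod.fst hEq)
      have h2 := congrArg ZMod.val h1
      rwa [ZMod.val_cast_of_lt (by omega), ZMod.val_cast_of_lt (by omega)] at h2),
      Finset.card_range]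
  · rintro v hv w hw
    simp only [Finset.mem_image, Finset.mem_range] at hv hw
    obtain ⟨i, hi, rfl⟩ := hv
    obtain ⟨j, hj, rfl⟩ := hw
    have hfst : (g : L) ^ p ^ i ≠ φ (j : ZMod p) := NOTIN i hi _
    rw [projNormGraph, SimpleGraph.fromRel_adj]
    constructor
    · intro hEq; exact hfst (congrArg Prod.fst hEq)
    · left
      show Algebra.norm (ZMod p) ((g : L) ^ p ^ i + φ (j : ZMod p))
        = ((1 : (ZMod p)ˣ) : ZMod p) * ((b j : (ZMod p)ˣ) : ZMod p)
      have key : (g : L) ^ p ^ i + φ (j : ZMod p) = ((g : L) + φ (j : ZMod p)) ^ p ^ i := by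
        rw [add_pow_char_pow, ← map_pow, ZMod.pow_card_pow]
      rw [key, norm_frob_pow, Units.val_one, one_mul]
      rfl
end

section
/- The projective norm graph P(7,4) contains a copy of the complete bipartite graph K_{4,6}. -/
open Polynomial

instance : Fact (Nat.Prime 7) := ⟨by norm_num⟩

/- ### Auxiliary material -/

namespace P74Aux

abbrev L := GaloisField 7 3
abbrev K := ZMod 7

noncomputable instance : Fintype L := Fintype.ofFinite L

lemma exists_gamma : ∃ γ : L, γ ^ 3 = 2 := by
  have h7 : (7 : L) = 0 := by exact_mod_cast CharP.cast_eq_zero L 7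
  obtain ⟨g, hg⟩ := IsCyclic.exists_generator (α := Lˣ)
  have hord : orderOf g = 342 := by
    rw [orderOf_eq_card_of_forall_mem_zpowers hg, Nat.card_units,
      GaloisField.card 7 3 (by norm_num)]; norm_num
  have hu : orderOf (g ^ 38) = 9 := by
    rw [orderOf_pow, hord]; norm_num [Nat.gcd]
  set u := g ^ 38 with hu_def
  have h9 : u ^ 9 = 1 := by rw [← hu]; exact pow_orderOf_eq_one u
  have h3 : u ^ 3 ≠ 1 := by
    intro h
    have := orderOf_dvd_of_pow_eq_one h
    rw [hu] at this
    omega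
  set δ : L := (u : L) with hδ
  have h9' : δ ^ 9 = 1 := by rw [hδ, ← Units.val_pow_eq_pow_val, h9, Units.val_one]
  have h3' : δ ^ 3 ≠ 1 := by
    rw [hδ, ← Units.val_pow_eq_pow_val]
    intro h
    exact h3 (Units.ext (by rw [h, Units.val_one]))
  have hx : (δ ^ 3 - 2) * (δ ^ 3 - 4) = 0 := by
    have hfac : (δ ^ 3 - 1) * ((δ^3) ^ 2 + δ^3 + 1) = 0 := by
      have : (δ ^ 3) ^ 3 = 1 := by rw [← pow_mul]; exact h9'
      linear_combination this
    have h2 : (δ^3) ^ 2 + δ^3 + 1 = 0 := by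
      rcases mul_eq_zero.mp hfac with h | h
      · exact absurd (by linear_combination h) h3'
      · exact h
    linear_combination h2 + (1 - δ^3) * h7
  rcases mul_eq_zero.mp hx with h | h
  · exact ⟨δ, by linear_combination h⟩
  · refine ⟨δ ^ 2, ?_⟩
    have : δ ^ 3 = 4 := by linear_combination h
    calc (δ^2)^3 = (δ^3)^2 := by ring
    _ = 2 := by rw [this]; linear_combination 2 * h7

/-- The Frobenius automorphism of `F_343` over `F_7`. -/
noncomputable def frobL : L ≃ₐ[K] L :=
  AlgEquiv.ofBijective
    { toRingHom := frobenius L 7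
      commutes' := fun r => by
        show (algebraMap K L r) ^ 7 = algebraMap K L r
        rw [← map_pow, ZMod.pow_card] }
    (Finite.injective_iff_bijective.mp (frobenius L 7).injective)

lemma frobL_apply (x : L) : frobL x = x ^ 7 := rfl

lemma key_identity (γ S T U : L) (hγ : γ^3 = 2) (h7 : (7:L) = 0) :
    (S+T*γ+U*γ^2) * ((S+4*T*γ+2*U*γ^2) * (S+2*T*γ+4*U*γ^2))
      = S^3+2*T^3+4*U^3+S*T*U := by
  linear_combination (32*S*T*U + 8*T^3 + 16*U^3 + (14*S*U^2+28*T^2*U)*γ + 28*T*U^2*γ^2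
      + 8*U^3*γ^3) * hγ
    + (2*T^3+4*U^3+9*S*T*U + (S^2*T+4*S*U^2+8*T^2*U)*γ + (S^2*U+2*S*T^2+8*T*U^2)*γ^2) * h7

/-- The norm form of `F_343 = F_7(γ)`, `γ³ = 2`, in coordinates. -/
lemma norm_formula (γ : L) (hγ : γ ^ 3 = 2) (s t u : ZMod 7) :
    Algebra.norm K (algebraMap K L s + algebraMap K L t * γ + algebraMap K L u * γ^2)
      = s^3 + 2*t^3 + 4*u^3 + s*t*u := by
  classical
  have h7 : (7 : L) = 0 := by exact_mod_cast CharP.cast_eq_zero L 7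
  have h2 : (2 : L) ≠ 0 := by
    rw [show (2:L) = algebraMap K L 2 from (map_ofNat _ 2).symm,
      show (0:L) = algebraMap K L 0 from (map_zero _).symm]
    exact fun h => absurd ((algebraMap K L).injective h) (by decide)
  have hγ0 : γ ≠ 0 := by intro h; rw [h] at hγ; exact h2 (by linear_combination -hγ)
  have hφγ : frobL γ = 4 * γ := by
    rw [frobL_apply]; linear_combination (γ^4 + 2*γ) * hγ
  have hφφγ : frobL (frobL γ) = 2 * γ := by
    rw [hφγ, map_mul, hφγ, frobL_apply]
    linear_combination (9362 * γ) * h7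
  have h1φ : (1 : L ≃ₐ[K] L) ≠ frobL := by
    intro h
    have hc : γ = 4 * γ := by
      have := DFunLike.congr_fun h γ
      rwa [AlgEquiv.one_apply, hφγ] at this
    exact hγ0 (by linear_combination (2:L) * hc + γ * h7)
  have h1φ2 : (1 : L ≃ₐ[K] L) ≠ frobL * frobL := by
    intro h
    have hc : γ = 2 * γ := by
      have := DFunLike.congr_fun h γ
      rwa [AlgEquiv.one_apply, AlgEquiv.mul_apply, hφφγ] at this
    exact hγ0 (by linear_combination (-(1:L)) * hc)
  have hφφ2 : frobL ≠ frobL * frobL := by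
    intro h
    have hc : 4 * γ = 2 * γ := by
      have := DFunLike.congr_fun h γ
      rwa [AlgEquiv.mul_apply, hφφγ, hφγ] at this
    exact hγ0 (by linear_combination (4:L) * hc - γ * h7)
  have hnotmem1 : (1 : L ≃ₐ[K] L) ∉ ({frobL, frobL * frobL} : Finset (L ≃ₐ[K] L)) := by
    simp only [Finset.mem_insert, Finset.mem_singleton]
    push_neg
    exact ⟨h1φ, h1φ2⟩
  have hnotmem2 : frobL ∉ ({frobL * frobL} : Finset (L ≃ₐ[K] L)) := by
    simpa using hφφ2
  have huniv : (Finset.univ : Finset (L ≃ₐ[K] L))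
      = insert 1 ({frobL, frobL * frobL} : Finset (L ≃ₐ[K] L)) := by
    symm
    apply Finset.eq_univ_of_card
    rw [Fintype.card_eq_nat_card, IsGalois.card_aut_eq_finrank, GaloisField.finrank 7 (by norm_num)]
    rw [Finset.card_insert_of_notMem hnotmem1, Finset.card_insert_of_notMem hnotmem2,
      Finset.card_singleton]
  have hfx : frobL (algebraMap K L s + algebraMap K L t * γ + algebraMap K L u * γ^2)
      = algebraMap K L s + 4 * algebraMap K L t * γ + 2 * algebraMap K L u * γ^2 := by
    simp only [map_add, map_mul, map_pow, AlgEquiv.commutes, hφγ]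
    linear_combination (2 * algebraMap K L u * γ^2) * h7
  have hffx : frobL (algebraMap K L s + 4 * algebraMap K L t * γ + 2 * algebraMap K L u * γ^2)
      = algebraMap K L s + 2 * algebraMap K L t * γ + 4 * algebraMap K L u * γ^2 := by
    simp only [map_add, map_mul, map_pow, map_ofNat, AlgEquiv.commutes, hφγ]
    linear_combination (2 * algebraMap K L t * γ + 4 * algebraMap K L u * γ^2) * h7
  have hprod := Algebra.norm_eq_prod_automorphisms (K := K) (L := L)
    (algebraMap K L s + algebraMap K L t * γ + algebraMap K L u * γ^2)
  rw [huniv, Finset.prod_insert hnotmem1, Finset.prod_insert hnotmem2,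
    Finset.prod_singleton, AlgEquiv.one_apply, AlgEquiv.mul_apply, hfx, hffx] at hprod
  apply (algebraMap K L).injective
  rw [hprod]
  simp only [map_add, map_mul, map_pow, map_ofNat]
  exact key_identity γ (algebraMap K L s) (algebraMap K L t) (algebraMap K L u) hγ h7

/-- A vertex of the projective norm graph, in coordinates w.r.t. the basis `1, γ, γ²`. -/
noncomputable def vert (γ : L) (a b c : ZMod 7) (u : Kˣ) : L × Kˣ :=
  (algebraMap K L a + algebraMap K L b * γ + algebraMap K L c * γ^2, u)

lemma vert_ne (γ : L) (hγ : γ ^ 3 = 2) {a b c a' b' c' : ZMod 7} {u u' : Kˣ}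
    (h : ¬(a = a' ∧ b = b' ∧ c = c' ∧ u = u')) :
    vert γ a b c u ≠ vert γ a' b' c' u' := by
  intro heq
  rw [vert, vert, Prod.mk.injEq] at heq
  obtain ⟨h1, h2⟩ := heq
  have h0 : algebraMap K L (a-a') + algebraMap K L (b-b') * γ + algebraMap K L (c-c') * γ^2
      = 0 := by
    simp only [map_sub]
    linear_combination h1
  have hn := norm_formula γ hγ (a-a') (b-b') (c-c')
  rw [h0, Algebra.norm_zero] at hn
  have aniso : ∀ x y z : ZMod 7, x^3 + 2*y^3 + 4*z^3 + x*y*z = 0 → x = 0 ∧ y = 0 ∧ z = 0 := by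
    decide
  obtain ⟨ha, hb, hc⟩ := aniso _ _ _ hn.symm
  exact h ⟨by linear_combination ha, by linear_combination hb, by linear_combination hc, h2⟩

lemma vert_adj (γ : L) (hγ : γ ^ 3 = 2) {a b c a' b' c' : ZMod 7} {u u' : Kˣ}
    (hne : ¬(a = a' ∧ b = b' ∧ c = c' ∧ u = u'))
    (hval : (a+a')^3 + 2*(b+b')^3 + 4*(c+c')^3 + (a+a')*(b+b')*(c+c')
      = (u : ZMod 7) * (u' : ZMod 7)) :
    (projNormGraph K L).Adj (vert γ a b c u) (vert γ a' b' c' u') := by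
  rw [projNormGraph, SimpleGraph.fromRel_adj]
  refine ⟨vert_ne γ hγ hne, Or.inl ?_⟩
  show Algebra.norm K ((vert γ a b c u).1 + (vert γ a' b' c' u').1) = _
  have hsum : (vert γ a b c u).1 + (vert γ a' b' c' u').1
      = algebraMap K L (a+a') + algebraMap K L (b+b') * γ + algebraMap K L (c+c') * γ^2 := by
    rw [vert, vert]
    simp only [map_add]
    ring
  rw [hsum, norm_formula γ hγ, hval]
  rfl

/-- The units of `ZMod 7`. -/
def U1 : Kˣ := 1
def U2 : Kˣ := ⟨2, 4, by decide, by decide⟩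
def U3 : Kˣ := ⟨3, 5, by decide, by decide⟩
def U4 : Kˣ := ⟨4, 2, by decide, by decide⟩
def U5 : Kˣ := ⟨5, 3, by decide, by decide⟩
def U6 : Kˣ := ⟨6, 6, by decide, by decide⟩

end P74Aux

/-- The projective norm graph `P(7, 4)` (on `F_{7^3} × F_7ˣ`) contains a copy
of `K_{4,6}`. -/
theorem P74_contains_K46 :
    ContainsKst (projNormGraph (ZMod 7) (GaloisField 7 3)) 4 6 := by
  classical
  open P74Aux in
  obtain ⟨γ, hγ⟩ := exists_gamma
  refine ⟨{vert γ 0 2 1 U1, vert γ 0 1 4 U4, vert γ 0 1 6 U2, vert γ 6 5 3 U3},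
    {vert γ 0 5 0 U4, vert γ 1 5 0 U5, vert γ 4 3 0 U2,
      vert γ 5 4 2 U6, vert γ 6 1 4 U6, vert γ 6 3 3 U2}, ?_, ?_, ?_, ?_⟩
  · rw [Finset.disjoint_left]
    intro v hv hvB
    simp only [Finset.mem_insert, Finset.mem_singleton] at hv hvB
    rcases hv with rfl | rfl | rfl | rfl <;>
      rcases hvB with h | h | h | h | h | h <;>
      exact vert_ne γ hγ (by decide) h
  · rw [Finset.card_insert_of_notMem (by
        simp only [Finset.mem_insert, Finset.mem_singleton]
        push_neg
        exact ⟨vert_ne γ hγ (by decide), vert_ne γ hγ (by decide), vert_ne γ hγ (by decide)⟩),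
      Finset.card_insert_of_notMem (by
        simp only [Finset.mem_insert, Finset.mem_singleton]
        push_neg
        exact ⟨vert_ne γ hγ (by decide), vert_ne γ hγ (by decide)⟩),
      Finset.card_insert_of_notMem (by
        simp only [Finset.mem_singleton]
        exact vert_ne γ hγ (by decide)),
      Finset.card_singleton]
  · rw [Finset.card_insert_of_notMem (by
        simp only [Finset.mem_insert, Finset.mem_singleton]
        push_neg
        exact ⟨vert_ne γ hγ (by decide), vert_ne γ hγ (by decide), vert_ne γ hγ (by decide),
          vert_ne γ hγ (by decide), vert_ne γ hγ (by decide)⟩),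
      Finset.card_insert_of_notMem (by
        simp only [Finset.mem_insert, Finset.mem_singleton]
        push_neg
        exact ⟨vert_ne γ hγ (by decide), vert_ne γ hγ (by decide), vert_ne γ hγ (by decide),
          vert_ne γ hγ (by decide)⟩),
      Finset.card_insert_of_notMem (by
        simp only [Finset.mem_insert, Finset.mem_singleton]
        push_neg
        exact ⟨vert_ne γ hγ (by decide), vert_ne γ hγ (by decide), vert_ne γ hγ (by decide)⟩),
      Finset.card_insert_of_notMem (by
        simp only [Finset.mem_insert, Finset.mem_singleton]
        push_neg
        exact ⟨vert_ne γ hγ (by decide), vert_ne γ hγ (by decide)⟩),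
      Finset.card_insert_of_notMem (by
        simp only [Finset.mem_singleton]
        exact vert_ne γ hγ (by decide)),
      Finset.card_singleton]
  · intro p hp q hq
    simp only [Finset.mem_insert, Finset.mem_singleton] at hp hq
    rcases hp with rfl | rfl | rfl | rfl <;>
      rcases hq with rfl | rfl | rfl | rfl | rfl | rfl <;>
      exact vert_adj γ hγ (by decide) (by decide)
end

section
/- Let E be a field of characteristic zero containing a primitive third root of unity ζ and containing a root η of the polynomial g(x) = x³ + 21x² + 3x + 7, and suppose x³ − 2 is irreducible over E. Let F = E(θ) where θ is a root of x³ − 2. Define A := {(0,3), (1,4), (2,5), (θ+1, 6)} ⊆ F × E, and for each root η of g in E define the pair (−((1−η)/4)θ² − ((1+η)/2)θ − 1, (1+3η²)/4), and define B ⊆ F × E to be the set of the three pairs (ζ^k θ² − 1, 1) for 0 ≤ k ≤ 2 together with the pairs associated to the roots η of g lying in E. Then for every (α, u) ∈ A and every (β, v) ∈ B, N_{F/E}(α + β) = u·v. -/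
open Polynomial

theorem norm_formula {E F : Type} [Field E] [Field F] [Algebra E F]
    (hirr : Irreducible (X ^ 3 - C 2 : E[X]))
    (θ : F) (hθ : θ ^ 3 = 2) (hgen : IntermediateField.adjoin E {θ} = ⊤)
    (a b c : E) :
    Algebra.norm E (algebraMap E F a + algebraMap E F b * θ + algebraMap E F c * θ ^ 2)
      = a ^ 3 + 2 * b ^ 3 + 4 * c ^ 3 - 6 * (a * b * c) := by
  have hmonic : (X ^ 3 - C 2 : E[X]).Monic := by
    apply monic_X_pow_sub_C _ (by norm_num)
  have haev : aeval θ (X ^ 3 - C 2 : E[X]) = 0 := by simp [hθ, map_ofNat]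
  have hint : IsIntegral E θ := ⟨X ^ 3 - C 2, hmonic, haev⟩
  have hmin : minpoly E θ = X ^ 3 - C 2 :=
    (minpoly.eq_of_irreducible_of_monic hirr haev hmonic).symm
  let pb0 := IntermediateField.adjoin.powerBasis hint
  let e : (IntermediateField.adjoin E {θ} : IntermediateField E F) ≃ₐ[E] F := by
    exact (IntermediateField.equivOfEq hgen).trans IntermediateField.topEquiv
  let pb := pb0.map e
  have hdim : pb.dim = 3 := by
    show pb0.dim = 3
    rw [IntermediateField.adjoin.powerBasis_dim]
    rw [hmin]
    simp [natDegree_X_pow_sub_C]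
  have hpbgen : pb.gen = θ := by
    show e pb0.gen = θ
    rfl
  let B : Module.Basis (Fin 3) E F := pb.basis.reindex (finCongr hdim)
  have hB : ∀ i : Fin 3, B i = θ ^ (i : ℕ) := by
    intro i
    simp only [B, Module.Basis.reindex_apply, PowerBasis.basis_eq_pow, hpbgen]
    congr 1
  have hB0 : B 0 = 1 := by rw [hB]; norm_num
  have hB1 : B 1 = θ := by rw [hB]; norm_num
  have hB2 : B 2 = θ ^ 2 := by rw [hB]; norm_num
  have hrepr : ∀ (r s t : E) (i : Fin 3),
      B.repr (r • B 0 + s • B 1 + t • B 2) i = ![r, s, t] i := by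
    intro r s t i
    simp only [map_add, map_smul, Module.Basis.repr_self, Finsupp.coe_add, Finsupp.coe_smul,
      Pi.add_apply, Pi.smul_apply, Finsupp.single_apply, smul_eq_mul]
    fin_cases i <;> simp
  set x := algebraMap E F a + algebraMap E F b * θ + algebraMap E F c * θ ^ 2 with hx
  have hcol0 : x * B 0 = a • B 0 + b • B 1 + c • B 2 := by
    simp only [hB0, hB1, hB2, Algebra.smul_def, hx]; ring
  have hcol1 : x * B 1 = (2 * c) • B 0 + a • B 1 + b • B 2 := by
    simp only [hB0, hB1, hB2, Algebra.smul_def, hx, map_mul, map_ofNat]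
    linear_combination (algebraMap E F c) * hθ
  have hcol2 : x * B 2 = (2 * b) • B 0 + (2 * c) • B 1 + a • B 2 := by
    simp only [hB0, hB1, hB2, Algebra.smul_def, hx, map_mul, map_ofNat]
    linear_combination (algebraMap E F b + algebraMap E F c * θ) * hθ
  rw [Algebra.norm_eq_matrix_det B]
  have hM : Algebra.leftMulMatrix B x = !![a, 2*c, 2*b; b, a, 2*c; c, b, a] := by
    ext i j
    rw [Algebra.leftMulMatrix_eq_repr_mul]
    fin_cases j
    · show B.repr (x * B 0) i = _
      rw [hcol0, hrepr]; fin_cases i <;> rfl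
    · show B.repr (x * B 1) i = _
      rw [hcol1, hrepr]; fin_cases i <;> rfl
    · show B.repr (x * B 2) i = _
      rw [hcol2, hrepr]; fin_cases i <;> rfl
  rw [hM, Matrix.det_fin_three]
  norm_num
  simp only [Matrix.cons_val, Matrix.cons_val_zero, Matrix.cons_val_one, Matrix.cons_val_two,
    Matrix.head_cons, Matrix.tail_cons, Matrix.vecHead]
  ring

/-- Let `E` be a field of characteristic zero containing a primitive third root of
unity `ζ` and a root of `g(x) = x³ + 21x² + 3x + 7`, over which `x³ - 2` is
irreducible, and let `F = E(θ)` with `θ` a root of `x³ - 2`.  With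
`A = {(0,3), (1,4), (2,5), (θ+1,6)}` and `B` consisting of the three pairs
`(ζ^k θ² - 1, 1)` for `0 ≤ k ≤ 2` together with the pairs
`(-((1-η)/4)θ² - ((1+η)/2)θ - 1, (1+3η²)/4)` for the roots `η` of `g` in `E`,
every `(α, u) ∈ A` and `(β, v) ∈ B` satisfy `N_{F/E}(α + β) = u·v`. -/
theorem K46_norm_equations (E F : Type) [Field E] [CharZero E] [Field F] [Algebra E F]
    (ζ : E) (hζ : IsPrimitiveRoot ζ 3)
    (hη : ∃ η : E, η ^ 3 + 21 * η ^ 2 + 3 * η + 7 = 0)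
    (hirr : Irreducible (X ^ 3 - C 2 : E[X]))
    (θ : F) (hθ : θ ^ 3 = 2) (hgen : IntermediateField.adjoin E {θ} = ⊤)
    (A B : Set (F × E))
    (hA : A = {((0 : F), (3 : E)), (1, 4), (2, 5), (θ + 1, 6)})
    (hB : B = {x | ∃ k : Fin 3, x = (algebraMap E F (ζ ^ (k : ℕ)) * θ ^ 2 - 1, 1)} ∪
      {x | ∃ η : E, η ^ 3 + 21 * η ^ 2 + 3 * η + 7 = 0 ∧
        x = (-(algebraMap E F ((1 - η) / 4)) * θ ^ 2 - algebraMap E F ((1 + η) / 2) * θ - 1,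
          (1 + 3 * η ^ 2) / 4)}) :
    ∀ au ∈ A, ∀ bv ∈ B, Algebra.norm E (au.1 + bv.1) = au.2 * bv.2 := by
  subst hA hB
  have key := norm_formula hirr θ hθ hgen
  have hζ3 : ζ ^ 3 = 1 := hζ.pow_eq_one
  intro au hau bv hbv
  simp only [Set.mem_insert_iff, Set.mem_singleton_iff] at hau
  simp only [Set.mem_union, Set.mem_setOf_eq] at hbv
  rcases hbv with ⟨k, rfl⟩ | ⟨η, hηeq, rfl⟩
  · have hζk3 : (ζ ^ (k : ℕ)) ^ 3 = 1 := by
      rw [← pow_mul, mul_comm, pow_mul, hζ3, one_pow]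
    rcases hau with rfl | rfl | rfl | rfl <;> dsimp only
    · rw [show (0 : F) + (algebraMap E F (ζ ^ (k : ℕ)) * θ ^ 2 - 1)
          = algebraMap E F (-1) + algebraMap E F 0 * θ + algebraMap E F (ζ ^ (k : ℕ)) * θ ^ 2 by
        simp only [map_neg, map_one, map_zero]; ring]
      rw [key]; linear_combination (4 : E) * hζk3
    · rw [show (1 : F) + (algebraMap E F (ζ ^ (k : ℕ)) * θ ^ 2 - 1)
          = algebraMap E F 0 + algebraMap E F 0 * θ + algebraMap E F (ζ ^ (k : ℕ)) * θ ^ 2 by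
        simp only [map_zero]; ring]
      rw [key]; linear_combination (4 : E) * hζk3
    · rw [show (2 : F) + (algebraMap E F (ζ ^ (k : ℕ)) * θ ^ 2 - 1)
          = algebraMap E F 1 + algebraMap E F 0 * θ + algebraMap E F (ζ ^ (k : ℕ)) * θ ^ 2 by
        simp only [map_zero, map_one]; ring]
      rw [key]; linear_combination (4 : E) * hζk3
    · rw [show θ + 1 + (algebraMap E F (ζ ^ (k : ℕ)) * θ ^ 2 - 1)
          = algebraMap E F 0 + algebraMap E F 1 * θ + algebraMap E F (ζ ^ (k : ℕ)) * θ ^ 2 by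
        simp only [map_zero, map_one]; ring]
      rw [key]; linear_combination (4 : E) * hζk3
  · rcases hau with rfl | rfl | rfl | rfl <;> dsimp only
    · rw [show (0 : F) + (-(algebraMap E F ((1 - η) / 4)) * θ ^ 2
            - algebraMap E F ((1 + η) / 2) * θ - 1)
          = algebraMap E F (-1) + algebraMap E F (-((1 + η) / 2)) * θ
            + algebraMap E F (-((1 - η) / 4)) * θ ^ 2 by
        simp only [map_neg, map_one]; ring]
      rw [key]; linear_combination (-3/16 : E) * hηeq
    · rw [show (1 : F) + (-(algebraMap E F ((1 - η) / 4)) * θ ^ 2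
            - algebraMap E F ((1 + η) / 2) * θ - 1)
          = algebraMap E F 0 + algebraMap E F (-((1 + η) / 2)) * θ
            + algebraMap E F (-((1 - η) / 4)) * θ ^ 2 by
        simp only [map_neg, map_zero]; ring]
      rw [key]; linear_combination (-3/16 : E) * hηeq
    · rw [show (2 : F) + (-(algebraMap E F ((1 - η) / 4)) * θ ^ 2
            - algebraMap E F ((1 + η) / 2) * θ - 1)
          = algebraMap E F 1 + algebraMap E F (-((1 + η) / 2)) * θ
            + algebraMap E F (-((1 - η) / 4)) * θ ^ 2 by
        simp only [map_neg, map_one]; ring]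
      rw [key]; linear_combination (-3/16 : E) * hηeq
    · rw [show θ + 1 + (-(algebraMap E F ((1 - η) / 4)) * θ ^ 2
            - algebraMap E F ((1 + η) / 2) * θ - 1)
          = algebraMap E F 0 + algebraMap E F ((1 - η) / 2) * θ
            + algebraMap E F (-((1 - η) / 4)) * θ ^ 2 by
        simp only [map_neg, map_zero, map_div₀, map_sub, map_one, map_ofNat, map_add]
        have : CharZero F := charZero_of_injective_algebraMap (algebraMap E F).injective
        field_simp
        ring]
      rw [key]; linear_combination (-3/16 : E) * hηeq
end

section
/- Let K be a field of characteristic zero, let t ≥ 4 be an integer, let θ ∈ K, and let f(x) = x^{t−1} − x + θ ∈ K[x]. Then the derivative f′(x) = (t−1)x^{t−2} − 1 has t−2 distinct roots in an algebraic closure of K, and f takes pairwise distinct values at these t−2 roots. -/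
open Polynomial

/-- For a field `K` of characteristic zero, `t ≥ 4`, `θ ∈ K` and
`f(x) = x^{t-1} - x + θ`, the derivative `f'(x) = (t-1)x^{t-2} - 1` has `t - 2`
distinct roots in an algebraic closure of `K`, and `f` takes pairwise distinct values
at these `t - 2` roots. -/
theorem derivative_distinct_roots_distinct_values (K : Type) [Field K] [CharZero K]
    (t : ℕ) (ht : 4 ≤ t) (θ : K)
    (f : (AlgebraicClosure K)[X])
    (hf : f = (X ^ (t - 1) - X + C θ : K[X]).map (algebraMap K (AlgebraicClosure K))) :
    (derivative f).roots.Nodup ∧ Multiset.card (derivative f).roots = t - 2 ∧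
      Set.InjOn (fun x => f.eval x) {x : AlgebraicClosure K | (derivative f).IsRoot x} := by
  obtain ⟨n, rfl⟩ : ∃ n, t = n + 4 := ⟨t - 4, by omega⟩
  set L := AlgebraicClosure K
  set φ := algebraMap K L
  have ht1 : n + 4 - 1 = n + 3 := by omega
  set c : L := ((n + 3 : ℕ) : L) with hc
  have hc0 : c ≠ 0 := Nat.cast_ne_zero.mpr (by omega)
  have hff : f = X ^ (n + 3) - X + C (φ θ) := by
    rw [hf, ht1]; simp [Polynomial.map_add, Polynomial.map_sub, Polynomial.map_pow]
  have hder : derivative f = C c * (X ^ (n + 2) - C c⁻¹) := by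
    rw [hff, mul_sub, ← C_mul, mul_inv_cancel₀ hc0]
    simp [derivative_X_pow, hc]
    rw [← C_eq_natCast, ← C_1]; simp only [← C_add]; congr 1; ring
  have hsep : Separable (X ^ (n + 2) - C c⁻¹ : L[X]) :=
    separable_X_pow_sub_C _ (Nat.cast_ne_zero.mpr (by omega)) (inv_ne_zero hc0)
  have hroots : (derivative f).roots = (X ^ (n + 2) - C c⁻¹ : L[X]).roots := by
    rw [hder, roots_C_mul _ hc0]
  refine ⟨?_, ?_, ?_⟩
  · rw [hroots]; exact nodup_roots hsep
  · have hs := splits_iff_card_roots.mp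
      (IsAlgClosed.splits (X ^ (n + 2) - C c⁻¹))
    rw [hroots, hs, natDegree_X_pow_sub_C]; omega
  · intro a ha b hb hab
    simp only [Set.mem_setOf_eq, IsRoot, hder, eval_mul, eval_sub, eval_pow, eval_X, eval_C,
      mul_eq_zero] at ha hb
    have ha' : a ^ (n + 2) = c⁻¹ := sub_eq_zero.mp (ha.resolve_left hc0)
    have hb' : b ^ (n + 2) = c⁻¹ := sub_eq_zero.mp (hb.resolve_left hc0)
    simp only [hff, eval_add, eval_sub, eval_pow, eval_X, eval_C] at hab
    have h3 : a ^ (n + 3) = c⁻¹ * a := by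
      rw [show n + 3 = (n + 2) + 1 by rfl, pow_succ, ha']
    have h4 : b ^ (n + 3) = c⁻¹ * b := by
      rw [show n + 3 = (n + 2) + 1 by rfl, pow_succ, hb']
    rw [h3, h4] at hab
    have hc1 : c⁻¹ - 1 ≠ 0 := by
      rw [sub_ne_zero]
      intro h
      rw [inv_eq_one] at h
      have : (n + 3 : ℕ) = 1 := Nat.cast_injective (by simpa [hc] using h)
      omega
    exact mul_left_cancel₀ hc1 (by linear_combination hab)
end
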